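/- Let X be a nonzero closed linear subspace of C(K). Then either the set {f ∈ X : f is d-Lipschitz} is of first category (meager) in X, or every element of X is d-Lipschitz and there exists λ > 0 such that L(f) ≤ λ‖f‖∞ for every f ∈ X. -/

import Mathlib

/-- Let `X` be a nonzero closed linear subspace of `C(K)`. Then either the
set of `d`-Lipschitz members of `X` is meager in `X`, or every element of `X` is
`d`-Lipschitz and there is `λ > 0` with `L(f) ≤ λ‖f‖∞` for all `f ∈ X`, where `L(f)` is
the least Lipschitz constant of `f`. -/
theorem lipschitz_subset_meager_or_all_lipschitz
    {K : Type*} [TopologicalSpace K] [CompactSpace K] [T2Space K]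
    (d : K → K → ℝ)
    (hd_nonneg : ∀ x y, 0 ≤ d x y)
    (hd_symm : ∀ x y, d x y = d y x)
    (hd_eq : ∀ x y, d x y = 0 ↔ x = y)
    (hd_tri : ∀ x y z, d x z ≤ d x y + d y z)
    (hd_lsc : LowerSemicontinuous fun p : K × K => d p.1 p.2)
    (X : Submodule ℝ C(K, ℝ)) (hXclosed : IsClosed (X : Set C(K, ℝ))) (hX : X ≠ ⊥) :
    IsMeagre {f : X | ∃ L ≥ 0, ∀ t₁ t₂ : K, |(f : C(K, ℝ)) t₁ - (f : C(K, ℝ)) t₂| ≤ L * d t₁ t₂} ∨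
    ((∀ f ∈ X, ∃ L ≥ 0, ∀ t₁ t₂ : K, |f t₁ - f t₂| ≤ L * d t₁ t₂) ∧
      ∃ lam > 0, ∀ f ∈ X,
        sInf {L : ℝ | 0 ≤ L ∧ ∀ t₁ t₂ : K, |f t₁ - f t₂| ≤ L * d t₁ t₂} ≤ lam * ‖f‖) := by
  classical
  set F : ℕ → Set X := fun n =>
    {f : X | ∀ t₁ t₂ : K, |(f : C(K, ℝ)) t₁ - (f : C(K, ℝ)) t₂| ≤ (n : ℝ) * d t₁ t₂} with hF
  have hFclosed : ∀ n, IsClosed (F n) := by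
    intro n
    have : F n = ⋂ t₁, ⋂ t₂,
        {f : X | |(f : C(K, ℝ)) t₁ - (f : C(K, ℝ)) t₂| ≤ (n : ℝ) * d t₁ t₂} := by
      ext f; simp [hF, Set.mem_iInter]
    rw [this]
    refine isClosed_iInter fun t₁ => isClosed_iInter fun t₂ => ?_
    have hc : ∀ t : K, Continuous fun f : X => (f : C(K, ℝ)) t := fun t =>
      (continuous_eval_const t).comp continuous_subtype_val
    exact isClosed_le (((hc t₁).sub (hc t₂)).abs) continuous_const
  have hsub : {f : X | ∃ L ≥ 0, ∀ t₁ t₂ : K,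
      |(f : C(K, ℝ)) t₁ - (f : C(K, ℝ)) t₂| ≤ L * d t₁ t₂} ⊆ ⋃ n, F n := by
    rintro f ⟨L, hL0, hL⟩
    obtain ⟨n, hn⟩ := exists_nat_ge L
    exact Set.mem_iUnion.2 ⟨n, fun t₁ t₂ =>
      (hL t₁ t₂).trans (mul_le_mul_of_nonneg_right hn (hd_nonneg t₁ t₂))⟩
  by_cases hint : ∀ n, interior (F n) = ∅
  · left
    refine IsMeagre.mono hsub (isMeagre_iUnion fun n => ?_)
    -- F n is closed with empty interior, hence nowhere dense, hence meagre
    have hnwd : IsNowhereDense (F n) := (hFclosed n).isNowhereDense_iff.2 (hint n)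
    rw [isMeagre_iff_countable_union_isNowhereDense]
    exact ⟨{F n}, by simpa using hnwd, Set.countable_singleton _, by simp⟩
  · right
    push_neg at hint
    obtain ⟨n, hn⟩ := hint
    obtain ⟨f₀, hf₀⟩ := hn
    obtain ⟨ε, hε, hball⟩ := Metric.mem_nhds_iff.1 (mem_interior_iff_mem_nhds.1 hf₀)
    have hf₀F : f₀ ∈ F n := hball (Metric.mem_ball_self hε)
    -- small elements of X have Lipschitz constant 2n
    have hsmall : ∀ g : X, ‖g‖ < ε → ∀ t₁ t₂ : K,
        |(g : C(K, ℝ)) t₁ - (g : C(K, ℝ)) t₂| ≤ (2 * n : ℝ) * d t₁ t₂ := by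
      intro g hg t₁ t₂
      have hmem : f₀ + g ∈ F n := by
        apply hball
        rw [Metric.mem_ball, dist_eq_norm]
        simpa using hg
      have h1 := hmem t₁ t₂
      have h2 := hf₀F t₁ t₂
      have e : ((f₀ + g : X) : C(K, ℝ)) t₁ - ((f₀ + g : X) : C(K, ℝ)) t₂
          - ((f₀ : C(K, ℝ)) t₁ - (f₀ : C(K, ℝ)) t₂)
          = (g : C(K, ℝ)) t₁ - (g : C(K, ℝ)) t₂ := by
        push_cast
        simp
        ring
      calc |(g : C(K, ℝ)) t₁ - (g : C(K, ℝ)) t₂|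
          ≤ |((f₀ + g : X) : C(K, ℝ)) t₁ - ((f₀ + g : X) : C(K, ℝ)) t₂|
            + |(f₀ : C(K, ℝ)) t₁ - (f₀ : C(K, ℝ)) t₂| := by
            rw [← e]; exact abs_sub _ _
        _ ≤ (n : ℝ) * d t₁ t₂ + (n : ℝ) * d t₁ t₂ := add_le_add h1 h2
        _ = (2 * n : ℝ) * d t₁ t₂ := by ring
    -- general scaling bound
    have hlip : ∀ g : X, ∀ t₁ t₂ : K,
        |(g : C(K, ℝ)) t₁ - (g : C(K, ℝ)) t₂| ≤ (4 * n / ε * ‖g‖) * d t₁ t₂ := by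
      intro g t₁ t₂
      by_cases hg0 : g = 0
      · subst hg0
        simp only [ZeroMemClass.coe_zero, ContinuousMap.zero_apply, sub_self, abs_zero, norm_zero,
          mul_zero, zero_mul, le_refl]
        exact mul_nonneg (mul_nonneg (by positivity) (norm_nonneg _)) (hd_nonneg t₁ t₂)
      · have hgn : (0 : ℝ) < ‖g‖ := norm_pos_iff.2 hg0
        set c : ℝ := ε / (2 * ‖g‖) with hc
        have hcpos : 0 < c := by positivity
        have hnorm : ‖c • g‖ < ε := by
          have : ‖c • g‖ = |c| * ‖g‖ := by
            have h0 := norm_smul c (g : C(K, ℝ)); rw [Real.norm_eq_abs] at h0; exact h0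
          rw [this, abs_of_pos hcpos, hc, div_mul_eq_mul_div, mul_comm,
            div_lt_iff₀ (by positivity)]
          nlinarith
        have h := hsmall (c • g) hnorm t₁ t₂
        have e : ((c • g : X) : C(K, ℝ)) t₁ - ((c • g : X) : C(K, ℝ)) t₂
            = c * ((g : C(K, ℝ)) t₁ - (g : C(K, ℝ)) t₂) := by
          push_cast; simp; ring
        rw [e, abs_mul, abs_of_pos hcpos] at h
        have h' : |(g : C(K, ℝ)) t₁ - (g : C(K, ℝ)) t₂| ≤ (2 * n / c) * d t₁ t₂ := by
          rw [div_mul_eq_mul_div, le_div_iff₀ hcpos, mul_comm _ c]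
          linarith [h]
        have : (2 * (n : ℝ) / c) = 4 * n / ε * ‖g‖ := by
          rw [hc]; field_simp; ring
        rwa [this] at h'
    constructor
    · intro f hf
      refine ⟨4 * n / ε * ‖(⟨f, hf⟩ : X)‖, by positivity, ?_⟩
      exact hlip ⟨f, hf⟩
    · refine ⟨4 * (n + 1) / ε, by positivity, ?_⟩
      intro f hf
      set g : X := ⟨f, hf⟩ with hg
      have hmem : 4 * (n : ℝ) / ε * ‖g‖ ∈
          {L : ℝ | 0 ≤ L ∧ ∀ t₁ t₂ : K, |f t₁ - f t₂| ≤ L * d t₁ t₂} := by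
        refine ⟨by positivity, fun t₁ t₂ => ?_⟩
        exact hlip g t₁ t₂
      have hbdd : BddBelow {L : ℝ | 0 ≤ L ∧ ∀ t₁ t₂ : K, |f t₁ - f t₂| ≤ L * d t₁ t₂} :=
        ⟨0, fun L hL => hL.1⟩
      calc sInf {L : ℝ | 0 ≤ L ∧ ∀ t₁ t₂ : K, |f t₁ - f t₂| ≤ L * d t₁ t₂}
          ≤ 4 * (n : ℝ) / ε * ‖g‖ := csInf_le hbdd hmem
        _ ≤ 4 * ((n : ℝ) + 1) / ε * ‖g‖ := by
            gcongr
            linarith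
        _ = 4 * ((n : ℝ) + 1) / ε * ‖f‖ := rfl
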